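/- Let d ≥ 1, let A ⊆ ℝ^d be a finite set, let r > 0 and c ∈ [0,1]. Then the Lebesgue volume of the r-thickening of the dilated set is at most the Lebesgue volume of the r-thickening of the set itself: |B_r(c·A)| ≤ |B_r(A)|. -/

import Mathlib

open Pointwise

open MeasureTheory

/-- The open `r`-thickening of a set `A ⊆ ℝ^d`. -/
def thick {d : ℕ} (r : ℝ) (A : Set (EuclideanSpace ℝ (Fin d))) :
    Set (EuclideanSpace ℝ (Fin d)) :=
  {x | ∃ a ∈ A, dist x a < r}

theorem inner_aux_kneser {E : Type*} [NormedAddCommGroup E] [InnerProductSpace ℝ E] {x y p q : E}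
    (h1 : dist x p ≤ dist x q) (h2 : dist y q ≤ dist y p) :
    (0:ℝ) ≤ inner ℝ (x - y) (p - q) := by
  rw [dist_eq_norm] at h1 h2
  rw [dist_eq_norm] at h1 h2
  have e1 : ‖x - p‖ ^ 2 ≤ ‖x - q‖ ^ 2 := pow_le_pow_left₀ (norm_nonneg _) h1 2
  have e2 : ‖y - q‖ ^ 2 ≤ ‖y - p‖ ^ 2 := pow_le_pow_left₀ (norm_nonneg _) h2 2
  rw [norm_sub_sq_real, norm_sub_sq_real] at e1 e2
  simp only [inner_sub_left, inner_sub_right]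
  linarith

theorem thick_measurable {d : ℕ} (r : ℝ) (A : Set (EuclideanSpace ℝ (Fin d))) :
    MeasurableSet (thick r A) := by
  have : thick r A = ⋃ a ∈ A, Metric.ball a r := by
    ext x; simp [thick, Metric.mem_ball]
  rw [this]
  exact (isOpen_biUnion fun a _ => Metric.isOpen_ball).measurableSet

/-- For a finite set `A ⊆ ℝ^d`, `r > 0` and `c ∈ [0,1]`,
the volume of the `r`-thickening of the dilated set is at most that of `A`:
`|B_r(c·A)| ≤ |B_r(A)|`. -/
theorem volume_thickening_dilation_le_of_finite (d : ℕ) (hd : 1 ≤ d)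
    (A : Set (EuclideanSpace ℝ (Fin d))) (hA : A.Finite) (r : ℝ) (hr : 0 < r)
    (c : ℝ) (hc₀ : 0 ≤ c) (hc₁ : c ≤ 1) :
    volume (thick r (c • A)) ≤ volume (thick r A) := by
  classical
  -- trivial case : A empty
  rcases A.eq_empty_or_nonempty with hAe | hAne
  · simp [hAe, thick, Set.smul_set_empty]
  -- case c = 1
  rcases eq_or_lt_of_le hc₁ with hc1 | hc1
  · rw [hc1, one_smul]
  -- case c = 0
  rcases eq_or_lt_of_le hc₀ with hc0 | hc0
  · subst hc0
    rw [Set.zero_smul_set hAne]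
    obtain ⟨a, ha⟩ := hAne
    have h1 : thick r ((0 : Set (EuclideanSpace ℝ (Fin d)))) =
        Metric.ball (0 : EuclideanSpace ℝ (Fin d)) r := by
      ext x; simp [thick, Metric.mem_ball]
    have h2 : Metric.ball a r ⊆ thick r A := fun x hx => ⟨a, ha, Metric.mem_ball.mp hx⟩
    calc volume (thick r (0 : Set (EuclideanSpace ℝ (Fin d))))
        = volume (Metric.ball (0 : EuclideanSpace ℝ (Fin d)) r) := by rw [h1]
      _ = volume (a +ᵥ Metric.ball (0 : EuclideanSpace ℝ (Fin d)) r) :=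
          (measure_vadd (μ := volume) a _).symm
      _ = volume (Metric.ball a r) := by rw [Metric.vadd_ball]; simp
      _ ≤ volume (thick r A) := measure_mono h2
  -- main case : 0 < c < 1
  obtain ⟨l, hl_nodup, hl_mem⟩ :
      ∃ l : List (EuclideanSpace ℝ (Fin d)), l.Nodup ∧ ∀ x, x ∈ l ↔ x ∈ A :=
    ⟨hA.toFinset.toList, Finset.nodup_toList _, fun x => by
      rw [Finset.mem_toList, hA.mem_toFinset]⟩
  set n := l.length with hn
  have hnpos : 0 < n := by
    obtain ⟨a, ha⟩ := hAne
    exact List.length_pos_iff.mpr (List.ne_nil_of_mem ((hl_mem a).mpr ha))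
  set b : Fin n → EuclideanSpace ℝ (Fin d) := fun i => l.get i with hb
  have hb_mem : ∀ i, b i ∈ A := fun i => (hl_mem _).mp (l.get_mem _)
  have hb_inj : Function.Injective b := fun i j h => (List.Nodup.get_inj_iff hl_nodup).mp h
  -- the pieces
  set f : Fin n → EuclideanSpace ℝ (Fin d) → ℝ := fun i x => dist x (c • b i) with hf
  set S : Fin n → Set (EuclideanSpace ℝ (Fin d)) := fun i =>
    thick r (c • A) ∩ ((⋂ j, {x | f i x ≤ f j x}) ∩ ⋂ j, ⋂ _ : j < i, {x | f i x < f j x})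
    with hS
  have hS_meas : ∀ i, MeasurableSet (S i) := by
    intro i
    refine (thick_measurable r _).inter (MeasurableSet.inter ?_ ?_)
    · exact MeasurableSet.iInter fun j => measurableSet_le
        ((continuous_id.dist continuous_const).measurable)
        ((continuous_id.dist continuous_const).measurable)
    · exact MeasurableSet.iInter fun j => MeasurableSet.iInter fun _ => measurableSet_lt
        ((continuous_id.dist continuous_const).measurable)
        ((continuous_id.dist continuous_const).measurable)
  -- S covers thick r (c • A)
  have hS_cover : thick r (c • A) = ⋃ i, S i := by
    apply Set.Subset.antisymm
    · intro x hx
      have hMne : {j : Fin n | ∀ k, f j x ≤ f k x}.Nonempty := by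
        have : Nonempty (Fin n) := ⟨⟨0, hnpos⟩⟩
        obtain ⟨j, hj⟩ := Finite.exists_min (fun j => f j x)
        exact ⟨j, hj⟩
      obtain ⟨i, hiM, hile⟩ := Set.exists_min_image _ id (Set.toFinite _) hMne
      refine Set.mem_iUnion.mpr ⟨i, hx, Set.mem_inter ?_ ?_⟩
      · exact Set.mem_iInter.mpr fun j => hiM j
      · refine Set.mem_iInter.mpr fun j => Set.mem_iInter.mpr fun hji => ?_
        have hjnM : j ∉ {j : Fin n | ∀ k, f j x ≤ f k x} := fun hjM =>
          absurd hji (not_lt.mpr (hile j hjM))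
        simp only [Set.mem_setOf_eq, not_forall, not_le] at hjnM
        obtain ⟨k, hk⟩ := hjnM
        exact lt_of_le_of_lt (hiM k) hk
    · exact Set.iUnion_subset fun i => Set.inter_subset_left
  -- S pairwise disjoint
  have hS_disj : Pairwise (Function.onFun Disjoint S) := by
    intro i j hij
    refine Set.disjoint_left.mpr fun x hxi hxj => ?_
    obtain ⟨-, hmin_i, hlt_i⟩ := hxi
    obtain ⟨-, hmin_j, hlt_j⟩ := hxj
    rcases lt_or_gt_of_ne hij with h | h
    · have hle : f i x ≤ f j x := Set.mem_iInter.mp hmin_i j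
      have hlt : f j x < f i x := Set.mem_iInter.mp (Set.mem_iInter.mp hlt_j i) h
      exact absurd hle (not_le.mpr hlt)
    · have hle : f j x ≤ f i x := Set.mem_iInter.mp hmin_j i
      have hlt : f i x < f j x := Set.mem_iInter.mp (Set.mem_iInter.mp hlt_i j) h
      exact absurd hle (not_le.mpr hlt)
  -- key : for x in S i, dist x (c • b i) < r
  have hS_close : ∀ i, ∀ x ∈ S i, dist x (c • b i) < r := by
    intro i x hx
    obtain ⟨hxt, hmin, -⟩ := hx
    obtain ⟨a', ha', hd'⟩ := hxt
    obtain ⟨a, ha, rfl⟩ := ha'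
    obtain ⟨j, hj⟩ : ∃ j, b j = a := by
      obtain ⟨j, hj⟩ := List.get_of_mem ((hl_mem a).mpr ha)
      exact ⟨j, hj⟩
    have hm := Set.mem_iInter.mp hmin j
    simp only [hf, Set.mem_setOf_eq, hj] at hm
    exact lt_of_le_of_lt hm hd'
  -- translated pieces
  set v : Fin n → EuclideanSpace ℝ (Fin d) := fun i => (1 - c) • b i with hv
  set T : Fin n → Set (EuclideanSpace ℝ (Fin d)) := fun i => v i +ᵥ S i with hT
  have hT_meas : ∀ i, MeasurableSet (T i) := fun i => (hS_meas i).const_vadd (v i)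
  have hT_sub : ∀ i, T i ⊆ thick r A := by
    intro i z hz
    obtain ⟨x, hx, rfl⟩ := hz
    refine ⟨b i, hb_mem i, ?_⟩
    have heq : dist (v i +ᵥ x) (b i) = dist x (c • b i) := by
      simp only [hv, vadd_eq_add, dist_eq_norm]
      congr 1
      rw [sub_smul, one_smul]
      abel
    rw [heq]
    exact hS_close i x hx
  have hT_disj : Pairwise (Function.onFun Disjoint T) := by
    intro i j hij
    refine Set.disjoint_left.mpr fun z hzi hzj => ?_
    obtain ⟨x, hx, hxz⟩ := hzi
    obtain ⟨y, hy, hyz⟩ := hzj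
    have hvv : v i + x = v j + y := hxz.trans hyz.symm
    have hxy0 : x - y = v j - v i :=
      sub_eq_sub_iff_add_eq_add.mpr (by rw [add_comm x (v i)]; exact hvv)
    have hxy : x - y = (1 - c) • (b j - b i) := by
      simp only [hxy0, hv, smul_sub]
    obtain ⟨-, hmin_x, -⟩ := hx
    obtain ⟨-, hmin_y, -⟩ := hy
    have h1 : dist x (c • b i) ≤ dist x (c • b j) := Set.mem_iInter.mp hmin_x j
    have h2 : dist y (c • b j) ≤ dist y (c • b i) := Set.mem_iInter.mp hmin_y i
    have key := inner_aux_kneser h1 h2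
    have hpq : c • b i - c • b j = (-c) • (b j - b i) := by
      rw [neg_smul, smul_sub]
      abel
    rw [hxy, hpq, real_inner_smul_left, real_inner_smul_right,
      real_inner_self_eq_norm_sq] at key
    have hs2 : ‖b j - b i‖ ^ 2 ≤ 0 := by nlinarith [mul_pos hc0 (sub_pos.mpr hc1)]
    have hbij : b j = b i := by
      have : ‖b j - b i‖ = 0 := le_antisymm (by nlinarith [norm_nonneg (b j - b i)]) (norm_nonneg _)
      exact sub_eq_zero.mp (norm_eq_zero.mp this)
    exact hij (hb_inj hbij).symm
  calc volume (thick r (c • A)) = volume (⋃ i, S i) := by rw [hS_cover]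
    _ = ∑' i, volume (S i) := measure_iUnion hS_disj hS_meas
    _ = ∑' i, volume (T i) := tsum_congr fun i => (measure_vadd (μ := volume) (v i) (S i)).symm
    _ = volume (⋃ i, T i) := (measure_iUnion hT_disj hT_meas).symm
    _ ≤ volume (thick r A) := measure_mono (Set.iUnion_subset hT_sub)
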